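/- Let E be a real inner product space, Ω ⊆ E a nonempty convex set, n ≥ 1, μ > 0, and L > 0. Let F, F' : E → ℝ be such that F is μ-strongly convex on Ω and F'(w) − F(w) = (1/n)(ℓ'(w) − ℓ(w)) for all w ∈ Ω, where ℓ and ℓ' are L-Lipschitz on Ω. If ŵ ∈ Ω minimizes F over Ω and ŵ' ∈ Ω minimizes F' over Ω, then ‖ŵ − ŵ'‖ ≤ 4L/(μn). -/

import Mathlib

lemma aux_sup_arg (φ D : ℝ) (hD0 : 0 ≤ D)
    (key : ∀ a : ℝ, 0 ≤ a → a < 1 → a * φ ≤ D) : φ ≤ D := by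
  by_contra hcon
  push_neg at hcon
  have hφpos : 0 < φ := lt_of_le_of_lt hD0 hcon
  have ha : (0:ℝ) ≤ (D + φ) / (2 * φ) := by positivity
  have ha1 : (D + φ) / (2 * φ) < 1 := by
    rw [div_lt_one (by positivity)]; linarith
  have hk := key _ ha ha1
  have he : (D + φ) / (2 * φ) * φ = (D + φ) / 2 := by
    field_simp
  rw [he] at hk
  linarith

/-- Quadratic growth at a minimizer of a strongly convex function. -/
lemma strongConvex_quad_growth {E : Type*} [NormedAddCommGroup E] [NormedSpace ℝ E]
    {Ω : Set E} {m : ℝ} {F : E → ℝ} (hF : StrongConvexOn Ω m F)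
    {what : E} (hmem : what ∈ Ω) (hmin : IsMinOn F Ω what)
    {w : E} (hw : w ∈ Ω) :
    m / 2 * ‖what - w‖ ^ 2 ≤ F w - F what := by
  have hD0 : 0 ≤ F w - F what := by
    have h0 : F what ≤ F w := hmin hw
    linarith
  apply aux_sup_arg _ _ hD0
  intro a ha ha1
  have hb : 0 < 1 - a := by linarith
  have h1 := hF.2 hmem hw ha hb.le (by ring : a + (1 - a) = 1)
  have h2 : F what ≤ F (a • what + (1 - a) • w) :=
    hmin (hF.1 hmem hw ha hb.le (by ring))
  simp only [smul_eq_mul] at h1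
  have hA : a * (1 - a) * (m / 2 * ‖what - w‖ ^ 2) ≤ (1 - a) * (F w - F what) := by
    nlinarith [h1, h2]
  have h5 : (1 - a) * (a * (m / 2 * ‖what - w‖ ^ 2)) ≤ (1 - a) * (F w - F what) := by
    nlinarith [hA]
  exact le_of_mul_le_mul_left h5 hb

/-- Replace-one-sample stability: if `F` is `μ`-strongly convex on `Ω`,
`F' - F = (1/n)(ℓ' - ℓ)` on `Ω` with `ℓ, ℓ'` `L`-Lipschitz on `Ω`, and `ŵ, ŵ'` minimize
`F, F'` over `Ω` respectively, then `‖ŵ - ŵ'‖ ≤ 4L/(μn)`. -/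
theorem stmt_2 {E : Type*} [NormedAddCommGroup E] [InnerProductSpace ℝ E]
    {Ω : Set E} (hne : Ω.Nonempty) (hconv : Convex ℝ Ω)
    {n : ℕ} (hn : 1 ≤ n) {m L : ℝ} (hm : 0 < m) (hL : 0 < L)
    {F F' l l' : E → ℝ}
    (hF : StrongConvexOn Ω m F)
    (hrel : ∀ w ∈ Ω, F' w - F w = (1 / (n : ℝ)) * (l' w - l w))
    (hlip : ∀ w ∈ Ω, ∀ w' ∈ Ω, |l w - l w'| ≤ L * ‖w - w'‖)
    (hlip' : ∀ w ∈ Ω, ∀ w' ∈ Ω, |l' w - l' w'| ≤ L * ‖w - w'‖)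
    {what what' : E} (hmem : what ∈ Ω) (hminF : IsMinOn F Ω what)
    (hmem' : what' ∈ Ω) (hminF' : IsMinOn F' Ω what') :
    ‖what - what'‖ ≤ 4 * L / (m * n) := by
  have hn0 : (0:ℝ) < n := by exact_mod_cast hn
  have hd0 : 0 ≤ ‖what - what'‖ := norm_nonneg _
  have hgrow : m / 2 * ‖what - what'‖ ^ 2 ≤ F what' - F what :=
    strongConvex_quad_growth hF hmem hminF hmem'
  have h1 := hrel what hmem
  have h2 := hrel what' hmem'
  have hmin' : F' what' ≤ F' what := hminF' hmem
  have hl : l what' - l what ≤ L * ‖what - what'‖ := by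
    have h := hlip what' hmem' what hmem
    rw [norm_sub_rev] at h
    exact (abs_le.mp h).2
  have hl' : l' what - l' what' ≤ L * ‖what - what'‖ :=
    (abs_le.mp (hlip' what hmem what' hmem')).2
  have hupper : F what' - F what ≤ 2 * L * ‖what - what'‖ / n := by
    have heq : F what' - F what =
        (F' what' - F' what)
          + (1 / (n:ℝ)) * ((l' what - l' what') + (l what' - l what)) := by
      field_simp at h1 h2 ⊢
      linarith
    rw [heq]
    have hle : (1 / (n:ℝ)) * ((l' what - l' what') + (l what' - l what)) ≤
        (1 / (n:ℝ)) * (2 * L * ‖what - what'‖) := by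
      apply mul_le_mul_of_nonneg_left _ (by positivity)
      linarith
    calc _ ≤ 0 + (1 / (n:ℝ)) * (2 * L * ‖what - what'‖) := by linarith
    _ = 2 * L * ‖what - what'‖ / n := by ring
  have hkey2 : m / 2 * ‖what - what'‖ ^ 2 * n ≤ 2 * L * ‖what - what'‖ :=
    (le_div_iff₀ hn0).mp (le_trans hgrow hupper)
  rcases eq_or_lt_of_le hd0 with h | h
  · rw [← h]; positivity
  · rw [le_div_iff₀ (by positivity)]
    nlinarith [hkey2, h, mul_pos h h]
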